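/- arXiv:1704.09001 — 2 statements merged into one kernel-verified Lean document; each statement's English description precedes it below -/
import Mathlib

section
/- Let α, β, γ, δ ∈ ℂ with Re(α) > 0, Re(β) > 0, Re(γ) > 0, Re(δ) > 0, let a, b ∈ ℂ with Re(a) > 0, Re(b) > 0, and let A ∈ ℂ with Re(A) > 0. Then for every z ∈ ℂ, ∫_0^1 t^{a − 1} (1 − t)^{b − 1} exp(−A/(t(1 − t))) · E_{α,β}^{γ,δ}(z t^{α}) dt = Σ_{n=0}^∞ [ (γ)_n z^n / (Γ(α n + β) (δ)_n) ] · B(a + n α, b; A). -/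
open Complex

/-- The Pochhammer symbol `(γ)_x = Γ(γ + x)/Γ(γ)`. -/
noncomputable def pochG (γ x : ℂ) : ℂ := Complex.Gamma (γ + x) / Complex.Gamma γ

/-- The extended beta function `B(x, y; A)`. -/
noncomputable def extBeta (x y A : ℂ) : ℂ :=
  ∫ t in (0:ℝ)..1, (t : ℂ) ^ (x - 1) * ((1 - t : ℝ) : ℂ) ^ (y - 1) *
    Complex.exp (-A / ((t : ℂ) * ((1 - t : ℝ) : ℂ)))

/-- Salim's generalized Mittag-Leffler function `E_{α,β}^{γ,δ}(z)`. -/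
noncomputable def salimML (α β γ δ z : ℂ) : ℂ :=
  ∑' n : ℕ, pochG γ n * z ^ n / (Complex.Gamma (α * n + β) * pochG δ n)

open MeasureTheory Set Filter Topology

/-- Real beta-type integral over `Ioo 0 1`. -/
noncomputable def bre (u v : ℝ) : ℝ :=
  ∫ t in Ioo (0:ℝ) 1, t ^ (u - 1) * (1 - t) ^ (v - 1)

lemma bre_integrand_integrable {u v : ℝ} (hu : 0 < u) (hv : 0 < v) :
    IntegrableOn (fun t : ℝ => t ^ (u - 1) * (1 - t) ^ (v - 1)) (Ioo (0:ℝ) 1) := by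
  have h := (Complex.betaIntegral_convergent (u := (u:ℂ)) (v := (v:ℂ)) (by simpa) (by simpa))
  have h2 : IntegrableOn (fun x : ℝ => (x:ℂ) ^ ((u:ℂ) - 1) * (1 - (x:ℂ)) ^ ((v:ℂ) - 1))
      (Ioc (0:ℝ) 1) := by
    rw [← intervalIntegrable_iff_integrableOn_Ioc_of_le zero_le_one]; exact h
  have h3 := (h2.mono_set Ioo_subset_Ioc_self).norm
  refine MeasureTheory.IntegrableOn.congr_fun h3 (fun t ht => ?_) measurableSet_Ioo
  obtain ⟨ht0, ht1⟩ := ht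
  rw [norm_mul,
    Complex.norm_cpow_eq_rpow_re_of_pos ht0]
  have h1t : (0:ℝ) < 1 - t := by linarith
  rw [show (1 - (t:ℂ)) = ((1 - t : ℝ) : ℂ) by push_cast; ring,
    Complex.norm_cpow_eq_rpow_re_of_pos h1t]
  simp [Complex.sub_re]

lemma bre_nonneg {u v : ℝ} : 0 ≤ bre u v := by
  refine setIntegral_nonneg measurableSet_Ioo fun t ht => ?_
  have h0 := ht.1
  have h1 : (0:ℝ) < 1 - t := by linarith [ht.2]
  positivity

lemma norm_betaIntegral_le {u v : ℂ} (hu : 0 < u.re) (hv : 0 < v.re) :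
    ‖Complex.betaIntegral u v‖ ≤ bre u.re v.re := by
  rw [Complex.betaIntegral, intervalIntegral.integral_of_le zero_le_one,
    integral_Ioc_eq_integral_Ioo]
  refine (norm_integral_le_integral_norm _).trans ?_
  rw [bre]
  refine le_of_eq (setIntegral_congr_fun measurableSet_Ioo fun t ht => ?_)
  obtain ⟨ht0, ht1⟩ := ht
  have h1t : (0:ℝ) < 1 - t := by linarith
  rw [norm_mul,
    Complex.norm_cpow_eq_rpow_re_of_pos ht0,
    show (1 - (t:ℂ)) = ((1 - t : ℝ) : ℂ) by push_cast; ring,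
    Complex.norm_cpow_eq_rpow_re_of_pos h1t]
  simp [Complex.sub_re]

lemma bre_tendsto_zero {x c v : ℝ} (hx : 0 < x) (hc : 0 < c) (hv : 0 < v) :
    Tendsto (fun n : ℕ => bre (x + n * c) v) atTop (𝓝 0) := by
  have hmain : Tendsto (fun n : ℕ => ∫ t in Ioo (0:ℝ) 1,
      t ^ (x + n * c - 1) * (1 - t) ^ (v - 1)) atTop (𝓝 (∫ _t in Ioo (0:ℝ) 1, (0:ℝ))) := by
    refine tendsto_integral_of_dominated_convergence
      (fun t => t ^ (x - 1) * (1 - t) ^ (v - 1)) ?_ ?_ ?_ ?_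
    · intro n
      refine (ContinuousOn.aestronglyMeasurable ?_ measurableSet_Ioo)
      exact (continuousOn_id.rpow_const fun x hx => Or.inl (ne_of_gt hx.1)).mul
        ((continuousOn_const.sub continuousOn_id).rpow_const
          fun x hx => Or.inl (by simp; linarith [hx.2]))
    · exact bre_integrand_integrable hx hv
    · intro n
      filter_upwards [ae_restrict_mem measurableSet_Ioo] with t ht
      obtain ⟨ht0, ht1⟩ := ht
      have h1t : (0:ℝ) < 1 - t := by linarith
      rw [Real.norm_of_nonneg (by positivity)]
      refine mul_le_mul_of_nonneg_right ?_ (by positivity)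
      refine Real.rpow_le_rpow_of_exponent_ge ht0 ht1.le ?_
      nlinarith [Nat.cast_nonneg (α := ℝ) n]
    · filter_upwards [ae_restrict_mem measurableSet_Ioo] with t ht
      obtain ⟨ht0, ht1⟩ := ht
      have h1 : Tendsto (fun n : ℕ => x + n * c - 1) atTop atTop := by
        refine tendsto_atTop_add_const_right _ _ ?_
        exact tendsto_atTop_add_const_left _ _
          ((tendsto_natCast_atTop_atTop).atTop_mul_const hc)
      have h2 : Tendsto (fun n : ℕ => t ^ (x + n * c - 1)) atTop (𝓝 0) :=
        (tendsto_rpow_atTop_of_base_lt_one t (by linarith) ht1).comp h1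
      simpa using h2.mul_const ((1 - t) ^ (v - 1))
  simpa [bre] using hmain

private lemma ratio_aux (u v z G1 G2 Gs Gsa Gg Gd : ℂ) (n : ℕ)
    (h1 : Gg ≠ 0) (h2 : Gd ≠ 0) (h3 : Gs ≠ 0) (h4 : Gsa ≠ 0) (hv : v ≠ 0) (h5 : G2 ≠ 0) :
    u * G1 / Gg * (z ^ n * z) / (Gsa * (v * G2 / Gd)) =
      G1 / Gg * z ^ n / (Gs * (G2 / Gd)) * (z * u / v) * (Gs / Gsa) := by
  field_simp

lemma summable_norm_c {α β γ δ z : ℂ} (hα : 0 < α.re) (hβ : 0 < β.re) (hγ : 0 < γ.re)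
    (hδ : 0 < δ.re) :
    Summable fun n : ℕ =>
      ‖pochG γ n * z ^ n / (Complex.Gamma (α * n + β) * pochG δ n)‖ := by
  set c : ℕ → ℂ := fun n => pochG γ n * z ^ n / (Complex.Gamma (α * n + β) * pochG δ n)
    with hc
  have hne : ∀ s : ℂ, 0 < s.re → s ≠ 0 := by
    intro s hs h; rw [h] at hs; simp at hs
  have hren : ∀ (s : ℂ) (n : ℕ), (s + (n:ℂ)).re = s.re + n := by intro s n; simp
  have hres : ∀ (n : ℕ), (α * (n:ℂ) + β).re = β.re + n * α.re := by
    intro n; simp [Complex.add_re, Complex.mul_re]; ring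
  have key : ∀ n : ℕ, c (n + 1) =
      c n * (z * (γ + n) / (δ + n)) * (Complex.betaIntegral (α * n + β) α /
        Complex.Gamma α) := by
    intro n
    have e1 : ((n + 1 : ℕ) : ℂ) = (n : ℂ) + 1 := by push_cast; ring
    have hγn : (γ + (n:ℂ)) ≠ 0 := hne _ (by rw [hren]; positivity)
    have hδn : (δ + (n:ℂ)) ≠ 0 := hne _ (by rw [hren]; positivity)
    have hsre : 0 < (α * n + β).re := by rw [hres]; positivity
    have hbeta := Complex.Gamma_mul_Gamma_eq_betaIntegral hsre hα
    have n1 : Complex.Gamma γ ≠ 0 := Complex.Gamma_ne_zero_of_re_pos hγ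
    have n2 : Complex.Gamma δ ≠ 0 := Complex.Gamma_ne_zero_of_re_pos hδ
    have n3 : Complex.Gamma (α * n + β) ≠ 0 := Complex.Gamma_ne_zero_of_re_pos hsre
    have n4 : Complex.Gamma (α * n + β + α) ≠ 0 := by
      refine Complex.Gamma_ne_zero_of_re_pos ?_
      rw [Complex.add_re, hres]; positivity
    have n5 : Complex.Gamma α ≠ 0 := Complex.Gamma_ne_zero_of_re_pos hα
    have n6 : Complex.Gamma (γ + n) ≠ 0 :=
      Complex.Gamma_ne_zero_of_re_pos (by rw [hren]; positivity)
    have n7 : Complex.Gamma (δ + n) ≠ 0 :=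
      Complex.Gamma_ne_zero_of_re_pos (by rw [hren]; positivity)
    have hb3 : Complex.betaIntegral (α * n + β) α / Complex.Gamma α =
        Complex.Gamma (α * n + β) / Complex.Gamma (α * n + β + α) := by
      have hb2 : Complex.betaIntegral (α * n + β) α =
          Complex.Gamma (α * n + β) * Complex.Gamma α / Complex.Gamma (α * n + β + α) := by
        rw [eq_div_iff n4, mul_comm (Complex.betaIntegral (α * (n:ℂ) + β) α)]
        exact hbeta.symm
      rw [hb2]
      field_simp
    have e2 : α * ((n:ℂ) + 1) + β = α * n + β + α := by ring
    have e3 : γ + ((n:ℂ) + 1) = (γ + n) + 1 := by ring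
    have e4 : δ + ((n:ℂ) + 1) = (δ + n) + 1 := by ring
    simp only [hc, pochG, e1, e2, e3, e4, Complex.Gamma_add_one _ hγn,
      Complex.Gamma_add_one _ hδn, hb3, pow_succ]
    exact ratio_aux _ _ _ _ _ _ _ _ _ _ n1 n2 n3 n4 hδn n7
  set K : ℝ := ‖z‖ * (1 + ‖γ‖ / δ.re) / ‖Complex.Gamma α‖ with hK
  set q : ℕ → ℝ := fun n => K * bre (β.re + n * α.re) α.re with hq
  have hKnn : 0 ≤ K := by
    apply div_nonneg _ (norm_nonneg _)
    have : 0 ≤ ‖γ‖ / δ.re := div_nonneg (norm_nonneg γ) hδ.le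
    positivity
  have hbound : ∀ n : ℕ, ‖c (n + 1)‖ ≤ q n * ‖c n‖ := by
    intro n
    have hδn : (0:ℝ) < δ.re + n := by positivity
    have habs : δ.re + n ≤ ‖δ + (n:ℂ)‖ := by
      have := Complex.re_le_norm (δ + n)
      rwa [hren] at this
    have hδn' : (0:ℝ) < ‖δ + (n:ℂ)‖ := lt_of_lt_of_le hδn habs
    have hfrac : ‖γ + (n:ℂ)‖ / ‖δ + (n:ℂ)‖ ≤ 1 + ‖γ‖ / δ.re := by
      calc ‖γ + (n:ℂ)‖ / ‖δ + (n:ℂ)‖ ≤ (‖γ‖ + n) / (δ.re + n) := by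
            apply div_le_div₀ (by positivity) _ hδn habs
            simpa using norm_add_le γ (n:ℂ)
        _ ≤ 1 + ‖γ‖ / δ.re := by
            rw [div_le_iff₀ hδn]
            have hd : ‖γ‖ / δ.re * δ.re = ‖γ‖ :=
              div_mul_cancel₀ _ (ne_of_gt hδ)
            nlinarith [div_nonneg (norm_nonneg γ) hδ.le, Nat.cast_nonneg (α := ℝ) n,
              norm_nonneg γ]
    have hsre : 0 < (α * n + β).re := by rw [hres]; positivity
    have hbetab : ‖Complex.betaIntegral (α * n + β) α‖ ≤ bre (β.re + n * α.re) α.re := by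
      have := norm_betaIntegral_le hsre hα
      rwa [hres] at this
    calc ‖c (n + 1)‖
        = ‖c n‖ * (‖z‖ * (‖γ + (n:ℂ)‖ / ‖δ + (n:ℂ)‖)) *
          (‖Complex.betaIntegral (α * n + β) α‖ / ‖Complex.Gamma α‖) := by
          rw [key n]; simp only [norm_mul, norm_div]; ring
      _ ≤ ‖c n‖ * (‖z‖ * (1 + ‖γ‖ / δ.re)) *
          (bre (β.re + n * α.re) α.re / ‖Complex.Gamma α‖) := by
          have h5 : (0:ℝ) < ‖Complex.Gamma α‖ :=
            norm_pos_iff.mpr (Complex.Gamma_ne_zero_of_re_pos hα)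
          gcongr
      _ = q n * ‖c n‖ := by rw [hq, hK]; ring
  have hq0 : Tendsto q atTop (𝓝 0) := by
    have := (bre_tendsto_zero hβ hα hα).const_mul K
    simpa using this
  have hev : ∀ᶠ n in atTop, q n < 1/2 :=
    hq0.eventually (gt_mem_nhds (by norm_num : (0:ℝ) < 1/2))
  refine summable_of_ratio_norm_eventually_le (r := 1/2) (by norm_num) ?_
  filter_upwards [hev] with n hn
  rw [norm_norm, norm_norm]
  exact (hbound n).trans (mul_le_mul_of_nonneg_right hn.le (norm_nonneg _))

/-- Euler type integral of Salim's generalized Mittag-Leffler function. -/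
theorem euler_integral_salimML
    (α β γ δ : ℂ) (hα : 0 < α.re) (hβ : 0 < β.re) (hγ : 0 < γ.re) (hδ : 0 < δ.re)
    (a b : ℂ) (ha : 0 < a.re) (hb : 0 < b.re)
    (A : ℂ) (hA : 0 < A.re) (z : ℂ) :
    (∫ t in (0:ℝ)..1, (t : ℂ) ^ (a - 1) * ((1 - t : ℝ) : ℂ) ^ (b - 1) *
        Complex.exp (-A / ((t : ℂ) * ((1 - t : ℝ) : ℂ))) *
        salimML α β γ δ (z * (t : ℂ) ^ α)) =
      ∑' n : ℕ, pochG γ n * z ^ n / (Complex.Gamma (α * n + β) * pochG δ n) *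
        extBeta (a + n * α) b A := by
  set c : ℕ → ℂ := fun n => pochG γ n * z ^ n / (Complex.Gamma (α * n + β) * pochG δ n)
    with hc
  set g : ℕ → ℝ → ℂ := fun n t =>
    (t : ℂ) ^ (a + n * α - 1) * ((1 - t : ℝ) : ℂ) ^ (b - 1) *
      Complex.exp (-A / ((t : ℂ) * ((1 - t : ℝ) : ℂ))) with hgdef
  have hren : ∀ n : ℕ, (a + (n:ℂ) * α).re = a.re + n * α.re := by
    intro n
    simp [Complex.add_re, Complex.mul_re]
  -- the exponential factor
  have hexp_bound : ∀ t ∈ Ioo (0:ℝ) 1,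
      ‖Complex.exp (-A / ((t : ℂ) * ((1 - t : ℝ) : ℂ)))‖ ≤ 1 := by
    intro t ht
    obtain ⟨ht0, ht1⟩ := ht
    have hs : (0:ℝ) < t * (1 - t) := by nlinarith
    have hcast : (t : ℂ) * ((1 - t : ℝ) : ℂ) = ((t * (1 - t) : ℝ) : ℂ) := by push_cast; ring
    rw [hcast, Complex.norm_exp, Complex.div_ofReal_re,
      Real.exp_le_one_iff]
    apply div_nonpos_of_nonpos_of_nonneg _ hs.le
    simp [Complex.neg_re]
    exact hA.le
  have hexp_cont : ContinuousOn
      (fun t : ℝ => Complex.exp (-A / ((t : ℂ) * ((1 - t : ℝ) : ℂ)))) (Ioo (0:ℝ) 1) := by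
    apply Complex.continuous_exp.comp_continuousOn
    apply ContinuousOn.div continuousOn_const
    · exact ((Complex.continuous_ofReal.comp continuous_id).continuousOn.mul
        ((Complex.continuous_ofReal.comp (continuous_const.sub continuous_id)).continuousOn))
    · intro t ht
      obtain ⟨ht0, ht1⟩ := ht
      exact mul_ne_zero (by exact_mod_cast ne_of_gt ht0)
        (by simp only [Complex.ofReal_ne_zero]; intro h; linarith)
  -- integrability of each g n
  have hg_int : ∀ n : ℕ, IntegrableOn (g n) (Ioo (0:ℝ) 1) := by
    intro n
    have hre : 0 < (a + n * α).re := by rw [hren]; positivity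
    have h1 : IntegrableOn
        (fun t : ℝ => (t:ℂ) ^ (a + n * α - 1) * (1 - (t:ℂ)) ^ (b - 1)) (Ioo (0:ℝ) 1) := by
      have h := Complex.betaIntegral_convergent hre hb
      rw [intervalIntegrable_iff_integrableOn_Ioc_of_le zero_le_one] at h
      exact h.mono_set Ioo_subset_Ioc_self
    have h2 : IntegrableOn
        (fun t : ℝ => (t:ℂ) ^ (a + n * α - 1) * ((1 - t : ℝ) : ℂ) ^ (b - 1))
        (Ioo (0:ℝ) 1) := by
      refine MeasureTheory.IntegrableOn.congr_fun h1 (fun t _ => ?_) measurableSet_Ioo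
      rw [Complex.ofReal_sub, Complex.ofReal_one]
    have h3 : Integrable (fun t : ℝ =>
        Complex.exp (-A / ((t : ℂ) * ((1 - t : ℝ) : ℂ))) *
        ((t:ℂ) ^ (a + n * α - 1) * ((1 - t : ℝ) : ℂ) ^ (b - 1)))
        (volume.restrict (Ioo (0:ℝ) 1)) := by
      refine Integrable.bdd_mul (c := 1) h2
        (hexp_cont.aestronglyMeasurable measurableSet_Ioo) ?_
      filter_upwards [ae_restrict_mem measurableSet_Ioo] with t ht
      exact hexp_bound t ht
    refine h3.congr (Filter.Eventually.of_forall fun t => ?_)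
    rw [hgdef]; ring
  have hF_int : ∀ n : ℕ, Integrable (fun t => c n * g n t)
      (volume.restrict (Ioo (0:ℝ) 1)) := fun n => (hg_int n).const_mul _
  -- norm bound for g n
  have hg_norm : ∀ n : ℕ, ∀ t ∈ Ioo (0:ℝ) 1,
      ‖g n t‖ ≤ t ^ (a.re - 1) * (1 - t) ^ (b.re - 1) := by
    intro n t ht
    obtain ⟨ht0, ht1⟩ := ht
    have h1t : (0:ℝ) < 1 - t := by linarith
    rw [hgdef]
    simp only [norm_mul]
    rw [Complex.norm_cpow_eq_rpow_re_of_pos ht0,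
      Complex.norm_cpow_eq_rpow_re_of_pos h1t]
    have e1 : (a + n * α - 1).re = a.re + n * α.re - 1 := by
      rw [Complex.sub_re, hren]; simp
    have e2 : (b - 1).re = b.re - 1 := by simp
    rw [e1, e2]
    have b1 : t ^ (a.re + n * α.re - 1) ≤ t ^ (a.re - 1) := by
      apply Real.rpow_le_rpow_of_exponent_ge ht0 ht1.le
      nlinarith [Nat.cast_nonneg (α := ℝ) n]
    calc t ^ (a.re + n * α.re - 1) * (1 - t) ^ (b.re - 1) *
          ‖Complex.exp (-A / ((t : ℂ) * ((1 - t : ℝ) : ℂ)))‖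
        ≤ t ^ (a.re - 1) * (1 - t) ^ (b.re - 1) * 1 := by
          apply mul_le_mul _ (hexp_bound t ⟨ht0, ht1⟩) (norm_nonneg _) (by positivity)
          exact mul_le_mul_of_nonneg_right b1 (by positivity)
      _ = t ^ (a.re - 1) * (1 - t) ^ (b.re - 1) := by ring
  -- summability of the integrals of norms
  have hsum : Summable fun n : ℕ => ∫ t in Ioo (0:ℝ) 1, ‖c n * g n t‖ := by
    have hle : ∀ n : ℕ, (∫ t in Ioo (0:ℝ) 1, ‖c n * g n t‖) ≤ ‖c n‖ * bre a.re b.re := by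
      intro n
      have : (∫ t in Ioo (0:ℝ) 1, ‖c n * g n t‖)
          = ‖c n‖ * ∫ t in Ioo (0:ℝ) 1, ‖g n t‖ := by
        simp_rw [norm_mul]
        exact MeasureTheory.integral_const_mul _ _
      rw [this]
      apply mul_le_mul_of_nonneg_left _ (norm_nonneg _)
      refine setIntegral_mono_on ((hg_int n).norm) (bre_integrand_integrable ha hb)
        measurableSet_Ioo (fun t ht => hg_norm n t ht)
    refine Summable.of_nonneg_of_le (fun n => ?_) hle
      (((summable_norm_c hα hβ hγ hδ (z := z)).mul_right (bre a.re b.re)))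
    exact integral_nonneg fun t => norm_nonneg _
  -- rewrite the integral as an integral over Ioo of a tsum
  rw [intervalIntegral.integral_of_le zero_le_one, integral_Ioc_eq_integral_Ioo]
  have congr1 : (∫ t in Ioo (0:ℝ) 1, (t : ℂ) ^ (a - 1) * ((1 - t : ℝ) : ℂ) ^ (b - 1) *
        Complex.exp (-A / ((t : ℂ) * ((1 - t : ℝ) : ℂ))) *
        salimML α β γ δ (z * (t : ℂ) ^ α))
      = ∫ t in Ioo (0:ℝ) 1, ∑' n : ℕ, c n * g n t := by
    refine setIntegral_congr_fun measurableSet_Ioo (fun t ht => ?_)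
    obtain ⟨ht0, ht1⟩ := ht
    have ht0' : (t:ℂ) ≠ 0 := by exact_mod_cast ne_of_gt ht0
    rw [salimML, ← tsum_mul_left]
    refine tsum_congr fun n => ?_
    have key2 : (z * (t:ℂ) ^ α) ^ n = z ^ n * (t:ℂ) ^ ((n:ℂ) * α) := by
      rw [mul_pow, Complex.cpow_nat_mul]
    have hsplit : (t:ℂ) ^ (a + (n:ℂ) * α - 1) = (t:ℂ) ^ (a - 1) * (t:ℂ) ^ ((n:ℂ) * α) := by
      rw [show a + (n:ℂ) * α - 1 = (a - 1) + (n:ℂ) * α by ring, Complex.cpow_add _ _ ht0']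
    rw [hgdef]
    simp only [hc]
    rw [key2, hsplit]
    ring
  rw [congr1, ← MeasureTheory.integral_tsum_of_summable_integral_norm hF_int hsum]
  refine tsum_congr fun n => ?_
  rw [MeasureTheory.integral_const_mul]
  rw [extBeta, intervalIntegral.integral_of_le zero_le_one, integral_Ioc_eq_integral_Ioo]
end

section
/- Let α, β, γ ∈ ℂ with Re(α) > 0, Re(β) > 0, Re(γ) > 0, let a, b ∈ ℂ with Re(a) > 0, Re(b) > 0, let A ∈ ℂ with Re(A) > 0, let m > 0 be real, and let q > 0 with q < Re(α) + 1. Then for every z ∈ ℂ, ∫_0^1 t^{a − 1} (1 − t)^{b − 1} exp(−A/(t^{m}(1 − t)^{m})) · E_{α,β}^{γ,q}(z t^{α}) dt = Σ_{n=0}^∞ [ (γ)_{qn} z^n / (Γ(α n + β) n!) ] · B(a + n α, b; A; m). -/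
open Complex

/-- The extended beta function `B(x, y; A; m)`. -/
noncomputable def extBetaM (x y A : ℂ) (m : ℝ) : ℂ :=
  ∫ t in (0:ℝ)..1, (t : ℂ) ^ (x - 1) * ((1 - t : ℝ) : ℂ) ^ (y - 1) *
    Complex.exp (-A / ((t : ℂ) ^ (m : ℂ) * ((1 - t : ℝ) : ℂ) ^ (m : ℂ)))

/-- The Shukla–Prajapati generalized Mittag-Leffler function `E_{α,β}^{γ,q}(z)`. -/
noncomputable def spML (α β γ : ℂ) (q : ℝ) (z : ℂ) : ℂ :=
  ∑' n : ℕ, pochG γ ((q * n : ℝ) : ℂ) * z ^ n /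
    (Complex.Gamma (α * n + β) * (n.factorial : ℂ))

open MeasureTheory Filter Topology Set

lemma sum_inv_sq_le {x : ℝ} (hx : 0 < x) (n : ℕ) :
    ∑ j ∈ Finset.range (n + 1), 1 / (x + j) ^ 2 ≤ 1 / x ^ 2 + 1 / x := by
  rw [Finset.sum_range_succ']
  have h1 : ∑ j ∈ Finset.range n, 1 / (x + ((j:ℕ) + 1 : ℕ)) ^ 2 ≤
      ∑ j ∈ Finset.range n, (1 / (x + j) - 1 / (x + ((j:ℕ) + 1 : ℕ))) := by
    refine Finset.sum_le_sum fun j _ => ?_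
    push_cast
    have hj : (0:ℝ) < x + j := by positivity
    have hj1 : (0:ℝ) < x + (j + 1) := by positivity
    have he : 1 / (x + j) - 1 / (x + ((j:ℝ) + 1)) = 1 / ((x + j) * (x + (j + 1))) := by
      field_simp
      ring
    rw [he]
    apply one_div_le_one_div_of_le (by positivity)
    nlinarith
  have h2 : ∑ j ∈ Finset.range n, ((fun k : ℕ => 1 / (x + k)) j - (fun k : ℕ => 1 / (x + k)) (j + 1))
      = 1 / (x + ((0:ℕ):ℝ)) - 1 / (x + n) := Finset.sum_range_sub' (fun k : ℕ => 1 / (x + k)) n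
  simp only [Nat.cast_zero, add_zero] at h2
  have hn0 : (0:ℝ) ≤ 1 / (x + n) := by positivity
  have h3 := h1.trans (le_of_eq h2)
  have h0 : 1 / (x + ((0:ℕ):ℝ)) ^ 2 = 1 / x ^ 2 := by norm_num
  rw [h0]
  have := h3
  linarith

lemma sqrt_le_mul_exp {c y : ℝ} (hc : 0 < c) :
    Real.sqrt (c ^ 2 + y ^ 2) ≤ c * Real.exp (y ^ 2 / (2 * c ^ 2)) := by
  have hre : (0:ℝ) ≤ c * Real.exp (y ^ 2 / (2 * c ^ 2)) := by positivity
  rw [show c * Real.exp (y ^ 2 / (2 * c ^ 2)) =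
      Real.sqrt ((c * Real.exp (y ^ 2 / (2 * c ^ 2))) ^ 2) from (Real.sqrt_sq hre).symm]
  apply Real.sqrt_le_sqrt
  have hsq : (c * Real.exp (y ^ 2 / (2 * c ^ 2))) ^ 2 = c ^ 2 * Real.exp (y ^ 2 / c ^ 2) := by
    rw [mul_pow, sq (Real.exp _), ← Real.exp_add]
    congr 1
    field_simp
    ring
  rw [hsq]
  have hu : c ^ 2 * (y ^ 2 / c ^ 2) = y ^ 2 := by field_simp
  nlinarith [Real.add_one_le_exp (y ^ 2 / c ^ 2), sq_nonneg c]

set_option maxHeartbeats 1000000 in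
lemma abs_GammaSeq_ge {s : ℂ} (hs : 0 < s.re) {n : ℕ} (hn : 1 ≤ n) :
    Real.GammaSeq s.re n * Real.exp (-(s.im ^ 2 * (1 / (2 * s.re ^ 2) + 1 / (2 * s.re)))) ≤
      ‖Complex.GammaSeq s n‖ := by
  set x := s.re with hx
  set y := s.im
  set E : ℝ := y ^ 2 * (1 / (2 * x ^ 2) + 1 / (2 * x)) with hEdef
  -- product bounds
  have hQpos : (0:ℝ) < ∏ j ∈ Finset.range (n + 1), (x + j) := by
    apply Finset.prod_pos; intro j _; positivity
  have hPpos : (0:ℝ) < ∏ j ∈ Finset.range (n + 1), ‖s + j‖ := by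
    apply Finset.prod_pos; intro j _
    apply norm_pos_iff.2
    intro h
    have : (s + j).re = 0 := by rw [h]; simp
    simp only [Complex.add_re, Complex.natCast_re] at this
    have : (0:ℝ) < x + j := by positivity
    linarith [this]
  have hprod : ∏ j ∈ Finset.range (n + 1), ‖s + j‖ ≤
      (∏ j ∈ Finset.range (n + 1), (x + j)) * Real.exp E := by
    have h1 : ∏ j ∈ Finset.range (n + 1), ‖s + j‖ ≤
        ∏ j ∈ Finset.range (n + 1), ((x + j) * Real.exp (y ^ 2 / (2 * (x + j) ^ 2))) := by
      refine Finset.prod_le_prod (fun j _ => (norm_nonneg _)) fun j _ => ?_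
      have hc : (0:ℝ) < x + j := by positivity
      have habs : ‖s + j‖ = Real.sqrt ((x + j) ^ 2 + y ^ 2) := by
        rw [Complex.norm_def, Complex.normSq_apply]
        simp only [Complex.add_re, Complex.add_im, Complex.natCast_re, Complex.natCast_im,
          add_zero]
        congr 1
        ring
      rw [habs]
      exact sqrt_le_mul_exp hc
    refine h1.trans ?_
    rw [Finset.prod_mul_distrib, ← Real.exp_sum]
    apply mul_le_mul_of_nonneg_left _ hQpos.le
    apply Real.exp_le_exp.2
    have : ∑ j ∈ Finset.range (n + 1), y ^ 2 / (2 * (x + j) ^ 2) =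
        (y ^ 2 / 2) * ∑ j ∈ Finset.range (n + 1), 1 / (x + j) ^ 2 := by
      rw [Finset.mul_sum]
      refine Finset.sum_congr rfl fun j _ => ?_
      have hc : (0:ℝ) < x + j := by positivity
      field_simp
    rw [this, hEdef]
    have hsum := sum_inv_sq_le hs n
    calc (y ^ 2 / 2) * ∑ j ∈ Finset.range (n + 1), 1 / (x + j) ^ 2
        ≤ (y ^ 2 / 2) * (1 / x ^ 2 + 1 / x) :=
          mul_le_mul_of_nonneg_left hsum (by positivity)
      _ = y ^ 2 * (1 / (2 * x ^ 2) + 1 / (2 * x)) := by ring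
  -- compute abs of GammaSeq
  have habsG : ‖Complex.GammaSeq s n‖ =
      (n:ℝ) ^ x * n.factorial / ∏ j ∈ Finset.range (n + 1), ‖s + j‖ := by
    rw [Complex.GammaSeq, norm_div, norm_mul, norm_prod]
    congr 2
    · rw [show ((n:ℂ)) = (((n:ℝ)):ℂ) by push_cast; ring,
        Complex.norm_cpow_eq_rpow_re_of_pos (by exact_mod_cast hn : (0:ℝ) < (n:ℝ))]
    · simp
  rw [habsG, Real.GammaSeq]
  have key : (n:ℝ) ^ x * n.factorial / (∏ j ∈ Finset.range (n + 1), (x + j)) * Real.exp (-E) =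
      (n:ℝ) ^ x * n.factorial / ((∏ j ∈ Finset.range (n + 1), (x + j)) * Real.exp E) := by
    rw [Real.exp_neg]
    field_simp
  rw [key]
  gcongr

lemma abs_Gamma_ge {s : ℂ} (hs : 0 < s.re) :
    Real.Gamma s.re * Real.exp (-(s.im ^ 2 * (1 / (2 * s.re ^ 2) + 1 / (2 * s.re)))) ≤
      ‖Complex.Gamma s‖ := by
  have h1 : Tendsto (fun n : ℕ => Real.GammaSeq s.re n *
      Real.exp (-(s.im ^ 2 * (1 / (2 * s.re ^ 2) + 1 / (2 * s.re))))) atTop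
      (𝓝 (Real.Gamma s.re * Real.exp (-(s.im ^ 2 * (1 / (2 * s.re ^ 2) + 1 / (2 * s.re)))))) :=
    (Real.GammaSeq_tendsto_Gamma s.re).mul_const _
  have h2 : Tendsto (fun n : ℕ => ‖Complex.GammaSeq s n‖) atTop
      (𝓝 (‖Complex.Gamma s‖)) :=
    (continuous_norm.tendsto _).comp (Complex.GammaSeq_tendsto_Gamma s)
  exact le_of_tendsto_of_tendsto h1 h2 (eventually_atTop.2 ⟨1, fun n hn => abs_GammaSeq_ge hs hn⟩)

lemma abs_Gamma_le {s : ℂ} (hs : 0 < s.re) :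
    ‖Complex.Gamma s‖ ≤ Real.Gamma s.re := by
  rw [Complex.Gamma_eq_integral hs, Real.Gamma_eq_integral hs, Complex.GammaIntegral]
  refine (norm_integral_le_integral_norm _).trans_eq ?_
  refine setIntegral_congr_fun measurableSet_Ioi fun x hx => ?_
  rw [norm_mul,
    Complex.norm_cpow_eq_rpow_re_of_pos hx, Complex.norm_real, Real.norm_eq_abs,
    _root_.abs_of_nonneg (Real.exp_pos _).le, Complex.sub_re, Complex.one_re]

lemma Gamma_interp_up {x δ : ℝ} (hx : 0 < x) (h0 : 0 ≤ δ) (h1 : δ ≤ 1) :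
    Real.Gamma (x + δ) ≤ Real.Gamma x * x ^ δ := by
  have hx1 : (0:ℝ) < x + 1 := by linarith
  have hc := Real.convexOn_log_Gamma.2 (mem_Ioi.2 hx) (mem_Ioi.2 hx1)
    (by linarith : (0:ℝ) ≤ 1 - δ) h0 (by ring)
  simp only [smul_eq_mul, Function.comp_apply] at hc
  have harg : (1 - δ) * x + δ * (x + 1) = x + δ := by ring
  rw [harg] at hc
  have hG : Real.Gamma (x + 1) = x * Real.Gamma x := Real.Gamma_add_one hx.ne'
  have hGpos : 0 < Real.Gamma x := Real.Gamma_pos_of_pos hx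
  have hGpos' : 0 < Real.Gamma (x + δ) := Real.Gamma_pos_of_pos (by linarith)
  rw [hG, Real.log_mul hx.ne' hGpos.ne'] at hc
  have hle : Real.log (Real.Gamma (x + δ)) ≤ Real.log (Real.Gamma x) + δ * Real.log x := by
    nlinarith [hc]
  calc Real.Gamma (x + δ) = Real.exp (Real.log (Real.Gamma (x + δ))) := (Real.exp_log hGpos').symm
    _ ≤ Real.exp (Real.log (Real.Gamma x) + δ * Real.log x) := Real.exp_le_exp.2 hle
    _ = Real.Gamma x * x ^ δ := by
        rw [Real.exp_add, Real.exp_log hGpos, Real.rpow_def_of_pos hx, mul_comm δ]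

lemma Gamma_interp_down {x δ : ℝ} (hx : 0 < x) (h0 : 0 ≤ δ) (h1 : δ ≤ 1) :
    Real.Gamma (x + 1) ≤ Real.Gamma (x + δ) * (x + δ) ^ (1 - δ) := by
  have hxd : (0:ℝ) < x + δ := by linarith
  have hxd1 : (0:ℝ) < x + δ + 1 := by linarith
  have hc := Real.convexOn_log_Gamma.2 (mem_Ioi.2 hxd) (mem_Ioi.2 hxd1)
    h0 (by linarith : (0:ℝ) ≤ 1 - δ) (by ring)
  simp only [smul_eq_mul, Function.comp_apply] at hc
  have harg : δ * (x + δ) + (1 - δ) * (x + δ + 1) = x + 1 := by ring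
  rw [harg] at hc
  have hG : Real.Gamma (x + δ + 1) = (x + δ) * Real.Gamma (x + δ) := Real.Gamma_add_one hxd.ne'
  have hGpos : 0 < Real.Gamma (x + δ) := Real.Gamma_pos_of_pos hxd
  have hGpos' : 0 < Real.Gamma (x + 1) := Real.Gamma_pos_of_pos (by linarith)
  rw [hG, Real.log_mul hxd.ne' hGpos.ne'] at hc
  have hle : Real.log (Real.Gamma (x + 1)) ≤
      Real.log (Real.Gamma (x + δ)) + (1 - δ) * Real.log (x + δ) := by nlinarith [hc]
  calc Real.Gamma (x + 1) = Real.exp (Real.log (Real.Gamma (x + 1))) := (Real.exp_log hGpos').symm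
    _ ≤ Real.exp (Real.log (Real.Gamma (x + δ)) + (1 - δ) * Real.log (x + δ)) :=
        Real.exp_le_exp.2 hle
    _ = Real.Gamma (x + δ) * (x + δ) ^ (1 - δ) := by
        rw [Real.exp_add, Real.exp_log hGpos, Real.rpow_def_of_pos hxd, mul_comm (1 - δ)]

lemma Gamma_add_le_aux : ∀ k : ℕ, ∀ w q : ℝ, 0 < w → 0 ≤ q → q ≤ k →
    Real.Gamma (w + q) ≤ Real.Gamma w * (w + q) ^ q := by
  intro k
  induction k with
  | zero =>
      intro w q hw hq hqk
      simp only [Nat.cast_zero] at hqk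
      have : q = 0 := le_antisymm hqk hq
      simp [this, Real.rpow_zero]
  | succ k ih =>
      intro w q hw hq hqk
      by_cases hq1 : q ≤ 1
      · calc Real.Gamma (w + q) ≤ Real.Gamma w * w ^ q := Gamma_interp_up hw hq hq1
          _ ≤ Real.Gamma w * (w + q) ^ q := by
              have := Real.rpow_le_rpow hw.le (by linarith : w ≤ w + q) hq
              have hGpos : 0 < Real.Gamma w := Real.Gamma_pos_of_pos hw
              nlinarith
      · push_neg at hq1
        have hq1' : (0:ℝ) ≤ q - 1 := by linarith
        have hqk' : q - 1 ≤ k := by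
          push_cast at hqk ⊢; linarith
        have hih := ih (w + 1) (q - 1) (by linarith) hq1' hqk'
        have harg : w + 1 + (q - 1) = w + q := by ring
        rw [harg] at hih
        rw [Real.Gamma_add_one hw.ne'] at hih
        have hwq : (0:ℝ) < w + q := by linarith
        have hpow : (w + q) ^ q = (w + q) * (w + q) ^ (q - 1) := by
          rw [Real.rpow_sub hwq, Real.rpow_one]
          field_simp
        rw [hpow]
        have hGpos : 0 < Real.Gamma w := Real.Gamma_pos_of_pos hw
        have hp2 : (0:ℝ) < (w + q) ^ (q - 1) := Real.rpow_pos_of_pos hwq _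
        nlinarith [mul_nonneg (mul_nonneg hq hGpos.le) hp2.le]

lemma Gamma_add_le {w q : ℝ} (hw : 0 < w) (hq : 0 ≤ q) :
    Real.Gamma (w + q) ≤ Real.Gamma w * (w + q) ^ q :=
  Gamma_add_le_aux ⌈q⌉₊ w q hw hq (Nat.le_ceil q)

lemma Gamma_add_ge_aux : ∀ k : ℕ, ∀ w p : ℝ, 1 ≤ w → 0 ≤ p → p ≤ k →
    Real.Gamma w * w ^ p / 2 ≤ Real.Gamma (w + p) := by
  intro k
  induction k with
  | zero =>
      intro w p hw hp hpk
      simp only [Nat.cast_zero] at hpk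
      have h0 : p = 0 := le_antisymm hpk hp
      have hGpos : 0 < Real.Gamma w := Real.Gamma_pos_of_pos (by linarith)
      simp only [h0, Real.rpow_zero, mul_one, add_zero]
      linarith
  | succ k ih =>
      intro w p hw hp hpk
      have hw0 : (0:ℝ) < w := by linarith
      have hGpos : 0 < Real.Gamma w := Real.Gamma_pos_of_pos hw0
      by_cases hp1 : p ≤ 1
      · have hdown := Gamma_interp_down hw0 hp hp1
        rw [Real.Gamma_add_one hw0.ne'] at hdown
        have hwp : (0:ℝ) < w + p := by linarith
        have hppos : (0:ℝ) < (w + p) ^ (1 - p) := Real.rpow_pos_of_pos hwp _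
        -- (w+p)^(1-p) ≤ 2 * w^(1-p)
        have h1 : (w + p) ^ (1 - p) ≤ 2 * w ^ (1 - p) := by
          calc (w + p) ^ (1 - p) ≤ (2 * w) ^ (1 - p) :=
                Real.rpow_le_rpow hwp.le (by linarith) (by linarith)
            _ = 2 ^ (1 - p) * w ^ (1 - p) := Real.mul_rpow (by norm_num) hw0.le
            _ ≤ 2 * w ^ (1 - p) := by
                have h2 : (2:ℝ) ^ (1 - p) ≤ 2 ^ (1:ℝ) :=
                  Real.rpow_le_rpow_of_exponent_le one_le_two (by linarith)
                rw [Real.rpow_one] at h2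
                have := Real.rpow_pos_of_pos hw0 (1 - p)
                nlinarith
        have hrw : w ^ p * w ^ (1 - p) = w := by
          rw [← Real.rpow_add hw0, show p + (1 - p) = 1 by ring, Real.rpow_one]
        have hwpP : (0:ℝ) < w ^ p := Real.rpow_pos_of_pos hw0 _
        -- Γ(w) w^p / 2 * (w+p)^(1-p) ≤ w Γ(w) ≤ Γ(w+p) * (w+p)^(1-p)
        have key : Real.Gamma w * w ^ p / 2 * (w + p) ^ (1 - p) ≤
            Real.Gamma (w + p) * (w + p) ^ (1 - p) := by
          refine le_trans ?_ hdown
          nlinarith [mul_le_mul_of_nonneg_left h1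
            (by positivity : (0:ℝ) ≤ Real.Gamma w * w ^ p / 2),
            mul_le_mul_of_nonneg_left hrw.le hGpos.le,
            mul_le_mul_of_nonneg_left hrw.ge hGpos.le]
        have := le_of_mul_le_mul_right key hppos
        exact this
      · push_neg at hp1
        have hp1' : (0:ℝ) ≤ p - 1 := by linarith
        have hpk' : p - 1 ≤ k := by push_cast at hpk ⊢; linarith
        have hih := ih (w + 1) (p - 1) (by linarith) hp1' hpk'
        have harg : w + 1 + (p - 1) = w + p := by ring
        rw [harg, Real.Gamma_add_one hw0.ne'] at hih
        have hmono : w ^ (p - 1) ≤ (w + 1) ^ (p - 1) :=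
          Real.rpow_le_rpow hw0.le (by linarith) hp1'
        have hrw : w * w ^ (p - 1) = w ^ p := by
          rw [show p = 1 + (p - 1) by ring, Real.rpow_add hw0, Real.rpow_one]
          ring_nf
        have hwpm : (0:ℝ) < w ^ (p - 1) := Real.rpow_pos_of_pos hw0 _
        nlinarith [mul_le_mul_of_nonneg_left hmono
          (by positivity : (0:ℝ) ≤ w * Real.Gamma w / 2)]


lemma Gamma_add_ge {w p : ℝ} (hw : 1 ≤ w) (hp : 0 ≤ p) :
    Real.Gamma w * w ^ p / 2 ≤ Real.Gamma (w + p) :=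
  Gamma_add_ge_aux ⌈p⌉₊ w p hw hp (Nat.le_ceil p)

lemma summable_aux {p q g xβ : ℝ} (hp : 0 < p) (hg : 0 < g) (hxβ : 0 < xβ) (hq : 0 < q)
    (hqp : q < p + 1) {D : ℝ} (hD : 0 ≤ D) :
    Summable (fun n : ℕ => Real.Gamma (g + q * n) * D ^ n /
      (Real.Gamma (p * n + xβ) * n.factorial)) := by
  set μ : ℝ := min p xβ with hμdef
  have hμ : 0 < μ := lt_min hp hxβ
  set f : ℕ → ℝ := fun n => Real.Gamma (g + q * n) * D ^ n /
      (Real.Gamma (p * n + xβ) * n.factorial) with hfdef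
  set r : ℕ → ℝ := fun n => (g + q * n + q) ^ q * D * 2 / ((p * n + xβ) ^ p * (n + 1)) with hrdef
  have hxpos : ∀ n : ℕ, (0:ℝ) < p * n + xβ := fun n => by positivity
  have hfnonneg : ∀ n : ℕ, 0 ≤ f n := by
    intro n
    have h1 : (0:ℝ) < Real.Gamma (g + q * n) := Real.Gamma_pos_of_pos (by positivity)
    have h2 : (0:ℝ) < Real.Gamma (p * n + xβ) := Real.Gamma_pos_of_pos (hxpos n)
    positivity
  -- Step 1 : ratio bound
  have hstep1 : ∀ n : ℕ, 1 ≤ p * n + xβ → f (n + 1) ≤ r n * f n := by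
    intro n hn1
    have hGq := Gamma_add_le (w := g + q * n) (by positivity) hq.le
    have hGp := Gamma_add_ge (w := p * n + xβ) (p := p) hn1 hp.le
    have hGqpos : (0:ℝ) < Real.Gamma (g + q * n) := Real.Gamma_pos_of_pos (by positivity)
    have hGppos : (0:ℝ) < Real.Gamma (p * n + xβ) := Real.Gamma_pos_of_pos (hxpos n)
    have hGppos' : (0:ℝ) < Real.Gamma (p * ((n:ℝ) + 1) + xβ) :=
      Real.Gamma_pos_of_pos (by positivity)
    have hxp : (0:ℝ) < (p * n + xβ) ^ p := Real.rpow_pos_of_pos (hxpos n) _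
    have hqq : (0:ℝ) < (g + q * n + q) ^ q := Real.rpow_pos_of_pos (by positivity) _
    have harg1 : g + q * ((n:ℝ) + 1) = g + q * n + q := by ring
    have harg2 : p * ((n:ℝ) + 1) + xβ = p * n + xβ + p := by ring
    calc f (n + 1) = Real.Gamma (g + q * n + q) * D ^ (n + 1) /
          (Real.Gamma (p * n + xβ + p) * (n + 1).factorial) := by
          simp only [hfdef]
          push_cast
          rw [harg1, harg2]
      _ ≤ (Real.Gamma (g + q * n) * (g + q * n + q) ^ q) * D ^ (n + 1) /
          ((Real.Gamma (p * n + xβ) * (p * n + xβ) ^ p / 2) * (n + 1).factorial) := by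
          gcongr
      _ = r n * f n := by
          simp only [hrdef, hfdef, Nat.factorial_succ]
          push_cast
          field_simp
          ring
  -- Step 2 : the ratio tends to 0
  have hb : ∀ n : ℕ, r n ≤ ((g + 2 * q) ^ q * D * 2 / μ ^ p) * ((n:ℝ) + 1) ^ (q - p - 1) := by
    intro n
    have ht : (0:ℝ) < (n:ℝ) + 1 := by positivity
    have hnum : (g + q * n + q) ^ q ≤ (g + 2 * q) ^ q * ((n:ℝ) + 1) ^ q := by
      rw [← Real.mul_rpow (by positivity) ht.le]
      apply Real.rpow_le_rpow (by positivity) _ hq.le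
      nlinarith [hg.le, hq.le, (Nat.cast_nonneg n : (0:ℝ) ≤ n)]
    have hden : μ ^ p * ((n:ℝ) + 1) ^ p ≤ (p * n + xβ) ^ p := by
      rw [← Real.mul_rpow hμ.le ht.le]
      apply Real.rpow_le_rpow (by positivity) _ hp.le
      have h1 : μ ≤ p := min_le_left _ _
      have h2 : μ ≤ xβ := min_le_right _ _
      nlinarith [(Nat.cast_nonneg n : (0:ℝ) ≤ n)]
    have hrpow : ((n:ℝ) + 1) ^ q / (((n:ℝ) + 1) ^ p * ((n:ℝ) + 1)) =
        ((n:ℝ) + 1) ^ (q - p - 1) := by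
      rw [show ((n:ℝ) + 1) ^ p * ((n:ℝ) + 1) = ((n:ℝ) + 1) ^ (p + 1) by
            rw [Real.rpow_add ht, Real.rpow_one],
        ← Real.rpow_sub ht]
      ring_nf
    have hμp : (0:ℝ) < μ ^ p := Real.rpow_pos_of_pos hμ _
    have htp : (0:ℝ) < ((n:ℝ) + 1) ^ p := Real.rpow_pos_of_pos ht _
    calc r n ≤ ((g + 2 * q) ^ q * ((n:ℝ) + 1) ^ q) * D * 2 /
          ((μ ^ p * ((n:ℝ) + 1) ^ p) * (n + 1)) := by
          simp only [hrdef]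
          gcongr
      _ = ((g + 2 * q) ^ q * D * 2 / μ ^ p) * (((n:ℝ) + 1) ^ q / (((n:ℝ) + 1) ^ p * ((n:ℝ) + 1))) := by
          field_simp
      _ = _ := by rw [hrpow]
  have hrnonneg : ∀ n : ℕ, 0 ≤ r n := by
    intro n
    have := hxpos n
    have : (0:ℝ) < (p * n + xβ) ^ p := Real.rpow_pos_of_pos (hxpos n) _
    positivity
  have htend : Tendsto r atTop (𝓝 0) := by
    have h1 : Tendsto (fun n : ℕ => ((n:ℝ) + 1) ^ (q - p - 1)) atTop (𝓝 0) := by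
      have h2 : Tendsto (fun x : ℝ => x ^ (-(p + 1 - q))) atTop (𝓝 0) :=
        tendsto_rpow_neg_atTop (by linarith)
      have h3 : Tendsto (fun n : ℕ => (n:ℝ) + 1) atTop atTop :=
        tendsto_atTop_add_const_right _ _ tendsto_natCast_atTop_atTop
      have h5 := h2.comp h3
      have he : -(p + 1 - q) = q - p - 1 := by ring
      simpa [Function.comp_def, he] using h5
    have h4 : Tendsto (fun n : ℕ => ((g + 2 * q) ^ q * D * 2 / μ ^ p) *
        ((n:ℝ) + 1) ^ (q - p - 1)) atTop (𝓝 0) := by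
      simpa using h1.const_mul ((g + 2 * q) ^ q * D * 2 / μ ^ p)
    exact squeeze_zero hrnonneg hb h4
  -- combine
  apply summable_of_ratio_norm_eventually_le (r := 1/2) (by norm_num)
  have hev1 : ∀ᶠ n : ℕ in atTop, r n ≤ 1/2 := by
    exact (htend.eventually_lt_const (by norm_num : (0:ℝ) < 1/2)).mono fun n h => h.le
  have hev2 : ∀ᶠ n : ℕ in atTop, 1 ≤ p * n + xβ := by
    have h3 : Tendsto (fun n : ℕ => p * n + xβ) atTop atTop := by
      apply tendsto_atTop_add_const_right
      exact (tendsto_natCast_atTop_atTop (R := ℝ)).const_mul_atTop hp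
    exact h3.eventually_ge_atTop 1
  filter_upwards [hev1, hev2] with n h1 h2
  rw [Real.norm_eq_abs, Real.norm_eq_abs, _root_.abs_of_nonneg (hfnonneg _), _root_.abs_of_nonneg (hfnonneg _)]
  calc f (n + 1) ≤ r n * f n := hstep1 n h2
    _ ≤ 1/2 * f n := mul_le_mul_of_nonneg_right h1 (hfnonneg n)

set_option maxHeartbeats 2000000 in
lemma summable_coeff (α β γ : ℂ) (hα : 0 < α.re) (hβ : 0 < β.re) (hγ : 0 < γ.re)
    (q : ℝ) (hq : 0 < q) (hqα : q < α.re + 1) (z : ℂ) :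
    Summable (fun n : ℕ => ‖pochG γ ((q * n : ℝ) : ℂ) * z ^ n /
      (Complex.Gamma (α * n + β) * (n.factorial : ℂ))‖) := by
  have hΓγ : Complex.Gamma γ ≠ 0 := by
    apply Complex.Gamma_ne_zero
    intro m h
    rw [h] at hγ
    simp only [Complex.neg_re, Complex.natCast_re] at hγ
    have : (0:ℝ) ≤ (m:ℝ) := Nat.cast_nonneg m
    linarith
  set p : ℝ := α.re
  set xβ : ℝ := β.re
  set g : ℝ := γ.re
  set μ : ℝ := min p xβ with hμdef
  have hμ : 0 < μ := lt_min hα hβ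
  set L : ℝ := |α.im| + |β.im| with hLdef
  set K : ℝ := L ^ 2 / (2 * μ ^ 2) + L ^ 2 / (2 * μ) with hKdef
  have hK0 : 0 ≤ K := by positivity
  set R : ℝ := ‖z‖ with hRdef
  have hΓγpos : 0 < ‖Complex.Gamma γ‖ := norm_pos_iff.2 hΓγ
  have hsum := summable_aux hα hγ hβ hq hqα (D := R * Real.exp K) (by positivity)
  have hbound : ∀ n : ℕ, ‖pochG γ ((q * n : ℝ) : ℂ) * z ^ n /
      (Complex.Gamma (α * n + β) * (n.factorial : ℂ))‖ ≤
      (Real.exp K / ‖Complex.Gamma γ‖) * (Real.Gamma (g + q * n) * (R * Real.exp K) ^ n /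
        (Real.Gamma (p * n + xβ) * n.factorial)) := by
    intro n
    set s : ℂ := α * n + β with hsdef
    have hsre : s.re = p * n + xβ := by simp [hsdef, Complex.add_re, Complex.mul_re]; rfl
    have hsim : s.im = α.im * n + β.im := by simp [hsdef, Complex.add_im, Complex.mul_im]
    have hx : (0:ℝ) < p * n + xβ := by positivity
    have hsre' : 0 < s.re := by rw [hsre]; exact hx
    have hgq : (0:ℝ) < g + q * n := by positivity
    -- upper bound on numerator Gamma
    have hup : ‖Complex.Gamma (γ + ((q * n : ℝ) : ℂ))‖ ≤ Real.Gamma (g + q * n) := by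
      have hre : (γ + ((q * n : ℝ) : ℂ)).re = g + q * n := by
        simp [Complex.add_re, Complex.ofReal_re]; rfl
      have := abs_Gamma_le (s := γ + ((q * n : ℝ) : ℂ)) (by rw [hre]; exact hgq)
      rwa [hre] at this
    -- E ≤ K (n+1)
    have hxn1 : μ * ((n:ℝ) + 1) ≤ p * n + xβ := by
      have h1 : μ ≤ p := min_le_left _ _
      have h2 : μ ≤ xβ := min_le_right _ _
      nlinarith [(Nat.cast_nonneg n : (0:ℝ) ≤ n)]
    have hy2 : s.im ^ 2 ≤ L ^ 2 * ((n:ℝ) + 1) ^ 2 := by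
      have h1 : |α.im * n + β.im| ≤ L * ((n:ℝ) + 1) := by
        calc |α.im * n + β.im| ≤ |α.im * n| + |β.im| := abs_add_le _ _
          _ = |α.im| * n + |β.im| := by rw [abs_mul, Nat.abs_cast]
          _ ≤ L * ((n:ℝ) + 1) := by
              have := (Nat.cast_nonneg n : (0:ℝ) ≤ n)
              have h2 : (0:ℝ) ≤ |α.im| := abs_nonneg _
              have h3 : (0:ℝ) ≤ |β.im| := abs_nonneg _
              nlinarith
      calc s.im ^ 2 = |α.im * n + β.im| ^ 2 := by rw [hsim, _root_.sq_abs]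
        _ ≤ (L * ((n:ℝ) + 1)) ^ 2 := by
            apply sq_le_sq' _ h1
            have : (0:ℝ) ≤ L * ((n:ℝ) + 1) := by positivity
            linarith [abs_nonneg (α.im * n + β.im), neg_abs_le (α.im * (n:ℝ) + β.im)]
        _ = L ^ 2 * ((n:ℝ) + 1) ^ 2 := by ring
    have hEK : s.im ^ 2 * (1 / (2 * (p * n + xβ) ^ 2) + 1 / (2 * (p * n + xβ))) ≤
        K * ((n:ℝ) + 1) := by
      have hn1 : (0:ℝ) < (n:ℝ) + 1 := by positivity
      have hμn : (0:ℝ) < μ * ((n:ℝ) + 1) := by positivity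
      have ht1 : 1 / (2 * (p * n + xβ) ^ 2) ≤ 1 / (2 * (μ * ((n:ℝ) + 1)) ^ 2) := by
        gcongr
      have ht2 : 1 / (2 * (p * n + xβ)) ≤ 1 / (2 * (μ * ((n:ℝ) + 1))) := by gcongr
      have hsim2 : (0:ℝ) ≤ s.im ^ 2 := sq_nonneg _
      have hsum2 : (0:ℝ) ≤ 1 / (2 * (p * n + xβ) ^ 2) + 1 / (2 * (p * n + xβ)) := by positivity
      calc s.im ^ 2 * (1 / (2 * (p * n + xβ) ^ 2) + 1 / (2 * (p * n + xβ)))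
          ≤ (L ^ 2 * ((n:ℝ) + 1) ^ 2) * (1 / (2 * (μ * ((n:ℝ) + 1)) ^ 2) +
              1 / (2 * (μ * ((n:ℝ) + 1)))) := by
            apply mul_le_mul hy2 _ hsum2 (by positivity)
            exact add_le_add ht1 ht2
        _ = L ^ 2 / (2 * μ ^ 2) + (L ^ 2 / (2 * μ)) * ((n:ℝ) + 1) := by
            field_simp
        _ ≤ K * ((n:ℝ) + 1) := by
            rw [hKdef]
            have hu : (0:ℝ) ≤ L ^ 2 / (2 * μ ^ 2) := by positivity
            have hv : (0:ℝ) ≤ L ^ 2 / (2 * μ) := by positivity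
            nlinarith
    -- lower bound on |Γ s|
    have hlow : Real.Gamma (p * n + xβ) * Real.exp (-(K * ((n:ℝ) + 1))) ≤
        ‖Complex.Gamma s‖ := by
      have h1 := abs_Gamma_ge hsre'
      rw [hsre] at h1
      refine le_trans ?_ h1
      apply mul_le_mul_of_nonneg_left _ (Real.Gamma_pos_of_pos hx).le
      apply Real.exp_le_exp.2
      linarith [hEK]
    -- assemble
    have habs : ‖pochG γ ((q * n : ℝ) : ℂ) * z ^ n /
        (Complex.Gamma s * (n.factorial : ℂ))‖ =
        ‖Complex.Gamma (γ + ((q * n : ℝ) : ℂ))‖ * R ^ n /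
          (‖Complex.Gamma γ‖ * (‖Complex.Gamma s‖ * n.factorial)) := by
      rw [pochG, div_mul_eq_mul_div, div_div, norm_div, norm_mul, norm_mul, norm_mul, norm_pow]
      simp [Complex.norm_natCast, hRdef]
    rw [habs]
    have hΓspos : 0 < ‖Complex.Gamma s‖ := by
      refine lt_of_lt_of_le ?_ hlow
      have := Real.Gamma_pos_of_pos hx
      positivity
    have hstep : ‖Complex.Gamma (γ + ((q * n : ℝ) : ℂ))‖ * R ^ n /
          (‖Complex.Gamma γ‖ * (‖Complex.Gamma s‖ * n.factorial)) ≤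
        Real.Gamma (g + q * n) * R ^ n /
          (‖Complex.Gamma γ‖ *
            ((Real.Gamma (p * n + xβ) * Real.exp (-(K * ((n:ℝ) + 1)))) * n.factorial)) := by
      gcongr
    refine hstep.trans (le_of_eq ?_)
    have hGpos : 0 < Real.Gamma (p * n + xβ) := Real.Gamma_pos_of_pos hx
    have hexp : Real.exp (K * ((n:ℝ) + 1)) = Real.exp K ^ n * Real.exp K := by
      rw [show K * ((n:ℝ) + 1) = (n:ℝ) * K + K by ring, Real.exp_add, Real.exp_nat_mul]
    rw [Real.exp_neg, mul_pow R, hexp]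
    have hfact : (0:ℝ) < n.factorial := by positivity
    field_simp
  refine Summable.of_nonneg_of_le (fun n => norm_nonneg _) hbound ?_
  exact hsum.mul_left _

set_option maxHeartbeats 2000000 in
/-- Euler type integral of the Shukla–Prajapati generalized Mittag-Leffler function. -/
theorem euler_integral_spML
    (α β γ : ℂ) (hα : 0 < α.re) (hβ : 0 < β.re) (hγ : 0 < γ.re)
    (a b : ℂ) (ha : 0 < a.re) (hb : 0 < b.re)
    (A : ℂ) (hA : 0 < A.re) (m : ℝ) (hm : 0 < m)
    (q : ℝ) (hq : 0 < q) (hqα : q < α.re + 1) (z : ℂ) :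
    (∫ t in (0:ℝ)..1, (t : ℂ) ^ (a - 1) * ((1 - t : ℝ) : ℂ) ^ (b - 1) *
        Complex.exp (-A / ((t : ℂ) ^ (m : ℂ) * ((1 - t : ℝ) : ℂ) ^ (m : ℂ))) *
        spML α β γ q (z * (t : ℂ) ^ α)) =
      ∑' n : ℕ, pochG γ ((q * n : ℝ) : ℂ) * z ^ n /
          (Complex.Gamma (α * n + β) * (n.factorial : ℂ)) *
        extBetaM (a + n * α) b A m := by
  set C : ℕ → ℂ := fun n => pochG γ ((q * n : ℝ) : ℂ) * z ^ n /
      (Complex.Gamma (α * n + β) * (n.factorial : ℂ)) with hCdef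
  set F : ℕ → ℝ → ℂ := fun n t => C n *
      ((t:ℂ) ^ (a + n * α - 1) * ((1 - t : ℝ) : ℂ) ^ (b - 1) *
        Complex.exp (-A / ((t:ℂ) ^ (m:ℂ) * ((1 - t : ℝ) : ℂ) ^ (m:ℂ)))) with hFdef
  have hsummable : Summable (fun n => ‖C n‖) :=
    summable_coeff α β γ hα hβ hγ q hq hqα z
  -- beta integrand is integrable on Ioo 0 1
  have hBint : IntegrableOn (fun t : ℝ => t ^ (a.re - 1) * (1 - t) ^ (b.re - 1))
      (Ioo (0:ℝ) 1) volume := by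
    have h := Complex.betaIntegral_convergent (u := (a.re:ℂ)) (v := (b.re:ℂ))
      (by simpa using ha) (by simpa using hb)
    rw [intervalIntegrable_iff_integrableOn_Ioo_of_le zero_le_one] at h
    have h2 : IntegrableOn (fun x : ℝ => ‖(x:ℂ) ^ ((a.re:ℂ) - 1) * (1 - (x:ℂ)) ^ ((b.re:ℂ) - 1)‖)
        (Ioo (0:ℝ) 1) volume := h.norm
    refine h2.congr_fun ?_ measurableSet_Ioo
    intro t ht
    have ht1 : (0:ℝ) < 1 - t := by linarith [ht.2]
    have hcast : (1 : ℂ) - (t:ℂ) = ((1 - t : ℝ) : ℂ) := by push_cast; ring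
    dsimp only
    rw [norm_mul, hcast,
      Complex.norm_cpow_eq_rpow_re_of_pos ht.1, Complex.norm_cpow_eq_rpow_re_of_pos ht1]
    simp [Complex.sub_re, Complex.ofReal_re, Complex.one_re]
  set B : ℝ := ∫ t in Ioo (0:ℝ) 1, t ^ (a.re - 1) * (1 - t) ^ (b.re - 1) with hBdef
  -- measurability
  have hmeas : ∀ n : ℕ, AEStronglyMeasurable (F n) (volume.restrict (Ioo (0:ℝ) 1)) := by
    intro n
    refine (ContinuousOn.aestronglyMeasurable ?_ measurableSet_Ioo)
    apply continuousOn_of_forall_continuousAt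
    intro t ht
    have ht0 : (0:ℝ) < t := ht.1
    have ht1 : (0:ℝ) < 1 - t := by linarith [ht.2]
    have c1 : ContinuousAt (fun u : ℝ => (u:ℂ) ^ (a + n * α - 1)) t :=
      Complex.continuousAt_ofReal_cpow_const t _ (Or.inr ht0.ne')
    have c2 : ContinuousAt (fun u : ℝ => ((1 - u : ℝ) : ℂ) ^ (b - 1)) t := by
      have := (Complex.continuousAt_ofReal_cpow_const (1 - t) (b - 1) (Or.inr ht1.ne')).comp
        (f := fun u : ℝ => 1 - u) (by fun_prop)
      exact this
    have c3m : ContinuousAt (fun u : ℝ => (u:ℂ) ^ (m:ℂ)) t :=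
      Complex.continuousAt_ofReal_cpow_const t _ (Or.inr ht0.ne')
    have c4m : ContinuousAt (fun u : ℝ => ((1 - u : ℝ) : ℂ) ^ (m:ℂ)) t :=
      (Complex.continuousAt_ofReal_cpow_const (1 - t) (m:ℂ) (Or.inr ht1.ne')).comp
        (f := fun u : ℝ => 1 - u) (by fun_prop)
    have hne : (t:ℂ) ^ (m:ℂ) * ((1 - t : ℝ) : ℂ) ^ (m:ℂ) ≠ 0 := by
      apply mul_ne_zero
      · intro h
        rcases (Complex.cpow_eq_zero_iff _ _).1 h with ⟨h1, -⟩
        exact_mod_cast absurd h1 (by exact_mod_cast ht0.ne')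
      · intro h
        rcases (Complex.cpow_eq_zero_iff _ _).1 h with ⟨h1, -⟩
        rw [Complex.ofReal_eq_zero] at h1
        linarith
    have c5 : ContinuousAt (fun u : ℝ =>
        Complex.exp (-A / ((u:ℂ) ^ (m:ℂ) * ((1 - u : ℝ) : ℂ) ^ (m:ℂ)))) t :=
      Complex.continuous_exp.continuousAt.comp (continuousAt_const.div (c3m.mul c4m) hne)
    exact continuousAt_const.mul ((c1.mul c2).mul c5)
  -- pointwise norm bound on Ioo
  have hnorm : ∀ n : ℕ, ∀ t ∈ Ioo (0:ℝ) 1, ‖F n t‖ ≤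
      ‖C n‖ * (t ^ (a.re - 1) * (1 - t) ^ (b.re - 1)) := by
    intro n t ht
    have ht0 : (0:ℝ) < t := ht.1
    have ht1 : (0:ℝ) < 1 - t := by linarith [ht.2]
    have h1 : ‖(t:ℂ) ^ (a + n * α - 1)‖ ≤ t ^ (a.re - 1) := by
      rw [Complex.norm_cpow_eq_rpow_re_of_pos ht0]
      apply Real.rpow_le_rpow_of_exponent_ge ht0 (by linarith [ht.2])
      have hre : (a + n * α - 1).re = a.re + n * α.re - 1 := by
        simp [Complex.add_re, Complex.sub_re, Complex.mul_re, Complex.natCast_re,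
          Complex.natCast_im, Complex.one_re]
      rw [hre]
      nlinarith [(Nat.cast_nonneg n : (0:ℝ) ≤ n), hα.le]
    have h2 : ‖((1 - t : ℝ) : ℂ) ^ (b - 1)‖ = (1 - t) ^ (b.re - 1) := by
      rw [Complex.norm_cpow_eq_rpow_re_of_pos ht1]
      simp [Complex.sub_re, Complex.ofReal_re, Complex.one_re]
    have h3 : ‖Complex.exp (-A /
        ((t:ℂ) ^ (m:ℂ) * ((1 - t : ℝ) : ℂ) ^ (m:ℂ)))‖ ≤ 1 := by
      have hr : (0:ℝ) < t ^ m * (1 - t) ^ m := by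
        have := Real.rpow_pos_of_pos ht0 m
        have := Real.rpow_pos_of_pos ht1 m
        positivity
      have hD : (t:ℂ) ^ (m:ℂ) * ((1 - t : ℝ) : ℂ) ^ (m:ℂ) =
          ((t ^ m * (1 - t) ^ m : ℝ) : ℂ) := by
        rw [← Complex.ofReal_cpow ht0.le, ← Complex.ofReal_cpow ht1.le, ← Complex.ofReal_mul]
      rw [hD, Complex.norm_exp]
      have hre : (-A / ((t ^ m * (1 - t) ^ m : ℝ) : ℂ)).re = -A.re / (t ^ m * (1 - t) ^ m) := by
        rw [Complex.div_ofReal_re, Complex.neg_re]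
      rw [hre]
      have : -A.re / (t ^ m * (1 - t) ^ m) ≤ 0 := by
        apply div_nonpos_of_nonpos_of_nonneg (by linarith) hr.le
      calc Real.exp (-A.re / (t ^ m * (1 - t) ^ m)) ≤ Real.exp 0 := Real.exp_le_exp.2 this
        _ = 1 := Real.exp_zero
    calc ‖F n t‖ = ‖C n‖ * (‖(t:ℂ) ^ (a + n * α - 1)‖ *
          ‖((1 - t : ℝ) : ℂ) ^ (b - 1)‖ *
          ‖Complex.exp (-A / ((t:ℂ) ^ (m:ℂ) * ((1 - t : ℝ) : ℂ) ^ (m:ℂ)))‖) := by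
          simp only [hFdef, norm_mul]
      _ ≤ ‖C n‖ * (t ^ (a.re - 1) * (1 - t) ^ (b.re - 1) * 1) := by
          apply mul_le_mul_of_nonneg_left _ (norm_nonneg _)
          apply mul_le_mul _ h3 (norm_nonneg _) (by positivity)
          apply mul_le_mul h1 h2.le (norm_nonneg _) (by positivity)
      _ = ‖C n‖ * (t ^ (a.re - 1) * (1 - t) ^ (b.re - 1)) := by ring
  -- lintegral bound
  have hlint1 : ∀ n : ℕ, (∫⁻ t in Ioo (0:ℝ) 1, ‖F n t‖₊) ≤
      ENNReal.ofReal (‖C n‖ * B) := by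
    intro n
    have step1 : (∫⁻ t in Ioo (0:ℝ) 1, ‖F n t‖₊) ≤
        ∫⁻ t in Ioo (0:ℝ) 1, ENNReal.ofReal (‖C n‖ *
          (t ^ (a.re - 1) * (1 - t) ^ (b.re - 1))) := by
      apply lintegral_mono_ae
      filter_upwards [ae_restrict_mem measurableSet_Ioo] with t ht
      rw [← enorm_eq_nnnorm, ← ofReal_norm]
      exact ENNReal.ofReal_le_ofReal (hnorm n t ht)
    refine step1.trans (le_of_eq ?_)
    rw [← ofReal_integral_eq_lintegral_ofReal (hBint.const_mul _)]
    · rw [MeasureTheory.integral_const_mul]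
    · filter_upwards [ae_restrict_mem measurableSet_Ioo] with t ht
      have ht0 : (0:ℝ) < t := ht.1
      have ht1 : (0:ℝ) < 1 - t := by linarith [ht.2]
      have := Real.rpow_pos_of_pos ht0 (a.re - 1)
      have := Real.rpow_pos_of_pos ht1 (b.re - 1)
      positivity
  have hlint : (∑' n : ℕ, ∫⁻ t in Ioo (0:ℝ) 1, ‖F n t‖₊) ≠ ⊤ := by
    apply ne_top_of_le_ne_top _ (ENNReal.tsum_le_tsum hlint1)
    have hB0 : 0 ≤ B := by
      apply setIntegral_nonneg measurableSet_Ioo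
      intro t ht
      exact mul_nonneg (Real.rpow_nonneg ht.1.le _)
        (Real.rpow_nonneg (by linarith [ht.2] : (0:ℝ) ≤ 1 - t) _)
    rw [← ENNReal.ofReal_tsum_of_nonneg (fun n => mul_nonneg (norm_nonneg _) hB0)
      (hsummable.mul_right B)]
    exact ENNReal.ofReal_ne_top
  -- main computation
  rw [intervalIntegral.integral_of_le zero_le_one, integral_Ioc_eq_integral_Ioo]
  have hptwise : ∀ t ∈ Ioo (0:ℝ) 1,
      (t : ℂ) ^ (a - 1) * ((1 - t : ℝ) : ℂ) ^ (b - 1) *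
        Complex.exp (-A / ((t : ℂ) ^ (m : ℂ) * ((1 - t : ℝ) : ℂ) ^ (m : ℂ))) *
        spML α β γ q (z * (t : ℂ) ^ α) = ∑' n : ℕ, F n t := by
    intro t ht
    have ht0 : (t:ℂ) ≠ 0 := by exact_mod_cast ht.1.ne'
    rw [spML, ← tsum_mul_left]
    refine tsum_congr fun n => ?_
    have hT : ((t:ℂ) ^ α) ^ n = (t:ℂ) ^ ((n:ℂ) * α) := (Complex.cpow_nat_mul _ n α).symm
    have hsplit : (t:ℂ) ^ (a + n * α - 1) = (t:ℂ) ^ (a - 1) * (t:ℂ) ^ ((n:ℂ) * α) := by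
      rw [← Complex.cpow_add _ _ ht0]
      congr 1
      ring
    simp only [hFdef, hCdef]
    rw [hsplit, mul_pow, hT]
    ring
  rw [setIntegral_congr_fun measurableSet_Ioo hptwise]
  rw [integral_tsum hmeas hlint]
  refine tsum_congr fun n => ?_
  have hext : extBetaM (a + n * α) b A m = ∫ t in Ioo (0:ℝ) 1,
      (t:ℂ) ^ (a + n * α - 1) * ((1 - t : ℝ) : ℂ) ^ (b - 1) *
        Complex.exp (-A / ((t:ℂ) ^ (m:ℂ) * ((1 - t : ℝ) : ℂ) ^ (m:ℂ))) := by
    rw [extBetaM, intervalIntegral.integral_of_le zero_le_one, integral_Ioc_eq_integral_Ioo]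
  rw [hext, ← MeasureTheory.integral_const_mul]
end
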